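/- Let t ≥ 4 be even, let A ⊆ {1,…,t} be a nonempty union of ρ pairwise nonadjacent intervals [i_1,j_1], …, [i_ρ,j_ρ] (j_k + 2 ≤ i_{k+1}) with 1 ∉ A and t ∉ A. Let R be the distinguished symmetric cycle on {1,−1}^t and W(R) its subtope matrix. Then _{−A}T^{(+)} = x̄·W(R) where x̄ = P(t)^1 + Σ_{k=1}^{ρ} P(t)^{j_k+1} − Σ_{ℓ=1}^{ρ} P(t)^{i_ℓ}. -/

import Mathlib

def Pmat (t : ℕ) : Matrix (Fin t) (Fin t) ℝ :=
  Matrix.of fun i j =>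
    if (i : ℕ) ≤ (j : ℕ) then (-1 : ℝ) ^ ((i : ℕ) + (j : ℕ))
    else (-1 : ℝ) ^ ((i : ℕ) + (j : ℕ) + 1)

def Rcyc (t : ℕ) : ℕ → Fin t → ℝ := fun s i =>
  if s < t then (if (i : ℕ) < s then -1 else 1)
  else (if (i : ℕ) < s - t then 1 else -1)

noncomputable def Wmat (t : ℕ) : Matrix (Fin t) (Fin t) ℝ :=
  Matrix.of fun (k : Fin t) (j : Fin t) =>
    (Rcyc t (k : ℕ) j + Rcyc t ((k : ℕ) + 1) j) / 2

lemma A_closed (m n : ℕ) :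
    ∑ k ∈ Finset.range n, (if m ≤ k then (-1:ℝ)^(m+k) else (-1:ℝ)^(m+k+1))
    = (-1:ℝ)^(m+1) * (if Odd (min n m) then 1 else 0)
      + (if m < n ∧ Odd (n - m) then 1 else 0) := by
  induction n with
  | zero => simp
  | succ n ih =>
    rw [Finset.sum_range_succ, ih]
    rcases lt_trichotomy n m with h | h | h
    · have h1 : min n m = n := by omega
      have h2 : min (n+1) m = n + 1 := by omega
      have h3 : ¬ m < n := by omega
      have h4 : ¬ m ≤ n := by omega
      have h5 : ¬ m < n + 1 := by omega
      rcases Nat.even_or_odd n with he | he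
      · simp [h1, h2, h3, h4, h5, Nat.not_odd_iff_even.2 he, Nat.odd_add_one, he, pow_add,
          pow_succ, he.neg_one_pow]
      · simp [h1, h2, h3, h4, h5, he, Nat.odd_add_one, pow_add, pow_succ, he.neg_one_pow,
          Nat.not_even_iff_odd.2 he]
    · subst h
      simp [Nat.odd_add_one, pow_add]
      rcases Nat.even_or_odd n with he | he
      · simp [he.neg_one_pow, Nat.not_odd_iff_even.2 he, he]
      · simp [he.neg_one_pow, he, Nat.not_even_iff_odd.2 he]
    · have h1 : min n m = m := by omega
      have h2 : min (n+1) m = m := by omega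
      have h4 : m ≤ n := by omega
      have h5 : m < n + 1 := by omega
      have h6 : n + 1 - m = (n - m) + 1 := by omega
      have hpow : ((-1:ℝ))^(m+n) = (-1)^(n-m) := by
        have : m + n = (n - m) + 2 * m := by omega
        rw [this, pow_add, pow_mul]; norm_num
      rcases Nat.even_or_odd (n - m) with he | he
      · simp [h1, h2, h4, h5, h, h6, hpow, he.neg_one_pow, Nat.not_odd_iff_even.2 he,
          Nat.odd_add_one, he]
      · simp [h1, h2, h4, h5, h, h6, hpow, he.neg_one_pow, Nat.not_even_iff_odd.2 he,
          Nat.odd_add_one, he]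

lemma Wmat_entry (t : ℕ) (k j : Fin t) :
    Wmat t k j = if (j:ℕ) < (k:ℕ) then -1 else if (j:ℕ) = (k:ℕ) then 0 else 1 := by
  have hk := k.isLt
  have hj := j.isLt
  simp only [Wmat, Matrix.of_apply, Rcyc]
  rcases lt_trichotomy ((j:ℕ)) ((k:ℕ)) with h | h | h
  · have h1 : (j:ℕ) < (k:ℕ) + 1 := by omega
    rcases Nat.lt_or_ge ((k:ℕ)+1) t with h2 | h2
    · simp [hk, h, h1, h2]
    · have h3 : (k:ℕ) + 1 - t = 0 := by omega
      simp [hk, h, h1, Nat.not_lt.2 h2, h3]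
  · have h1 : (j:ℕ) < (k:ℕ) + 1 := by omega
    rcases Nat.lt_or_ge ((k:ℕ)+1) t with h2 | h2
    · simp [hk, h, h1, h2]
    · have h3 : (k:ℕ) + 1 - t = 0 := by omega
      simp [hk, h, h1, Nat.not_lt.2 h2, h3]
  · have h1 : ¬ (j:ℕ) < (k:ℕ) + 1 := by omega
    have h2 : (k:ℕ) + 1 < t := by omega
    simp [hk, Nat.not_lt.2 (le_of_lt h), Nat.lt_irrefl, h1, h2, (by omega : ¬ (j:ℕ) < (k:ℕ)),
      (by omega : ¬ ((j:ℕ) = (k:ℕ)))]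
    omega

set_option maxHeartbeats 2000000 in
lemma key (t : ℕ) (hev : Even t) (m j : Fin t) :
    ∑ k : Fin t, Pmat t m k * Wmat t k j = if (j:ℕ) < (m:ℕ) then (-1:ℝ) else 1 := by
  have hJt := j.isLt
  have hMt := m.isLt
  set M := (m:ℕ) with hM
  set J := (j:ℕ) with hJ
  set p : ℕ → ℝ := fun k => if M ≤ k then (-1:ℝ)^(M+k) else (-1:ℝ)^(M+k+1) with hp
  set g : ℕ → ℝ := fun k => p k * (if J < k then -1 else if J = k then 0 else 1) with hg
  have hstep : ∑ k : Fin t, Pmat t m k * Wmat t k j = ∑ k ∈ Finset.range t, g k := by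
    rw [← Fin.sum_univ_eq_sum_range g t]
    refine Finset.sum_congr rfl fun k _ => ?_
    rw [Wmat_entry]
    simp only [hg, hp, Pmat, Matrix.of_apply]
    rfl
  rw [hstep]
  have hr : Finset.Ico 0 (J+1) = Finset.range (J+1) := by rw [Finset.range_eq_Ico]
  have hsplit : ∑ k ∈ Finset.range t, g k
      = ∑ k ∈ Finset.range (J+1), g k + ∑ k ∈ Finset.Ico (J+1) t, g k := by
    rw [Finset.range_eq_Ico, ← Finset.sum_Ico_consecutive g (by omega : 0 ≤ J+1) (by omega : J+1 ≤ t), hr]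
  have h1 : ∑ k ∈ Finset.range (J+1), g k = ∑ k ∈ Finset.range J, p k := by
    rw [Finset.sum_range_succ]
    have : g J = 0 := by simp [hg]
    rw [this, add_zero]
    refine Finset.sum_congr rfl fun k hk => ?_
    rw [Finset.mem_range] at hk
    simp only [hg]
    rw [if_neg (by omega : ¬ J < k), if_neg (by omega : ¬ J = k), mul_one]
  have h2 : ∑ k ∈ Finset.Ico (J+1) t, g k = -(∑ k ∈ Finset.range t, p k - ∑ k ∈ Finset.range (J+1), p k) := by
    rw [← Finset.sum_Ico_eq_sub p (by omega : J + 1 ≤ t)]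
    rw [← Finset.sum_neg_distrib]
    refine Finset.sum_congr rfl fun k hk => ?_
    rw [Finset.mem_Ico] at hk
    simp only [hg]
    rw [if_pos (by omega : J < k)]
    ring
  rw [hsplit, h1, h2, A_closed, A_closed, A_closed]
  clear hstep hsplit h1 h2
  clear hg
  clear g
  clear hp
  clear p
  clear_value M J
  clear hM hJ
  simp only [Nat.odd_iff]
  have htm : t % 2 = 0 := Nat.even_iff.1 hev
  have hm2 := Nat.mod_two_eq_zero_or_one M
  have hj2 := Nat.mod_two_eq_zero_or_one J
  have e1 : ((-1:ℝ))^(M+1) = if M % 2 = 0 then -1 else 1 := by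
    rcases hm2 with h | h
    · rw [if_pos h, Odd.neg_one_pow (Nat.odd_iff.2 (by omega))]
    · rw [if_neg (by omega), Even.neg_one_pow (Nat.even_iff.2 (by omega))]
  rw [e1]
  rw [show min t M = M from by omega]
  simp only [show (M < t ∧ (t - M) % 2 = 1) ↔ M % 2 = 1 from by omega]
  rcases lt_trichotomy J M with hc | hc | hc
  · rw [show min J M = J from by omega, show min (J+1) M = J+1 from by omega]
    simp only [show (M < J ∧ (J - M) % 2 = 1) ↔ False from iff_false_intro (by omega),
      show (M < J + 1 ∧ (J + 1 - M) % 2 = 1) ↔ False from iff_false_intro (by omega),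
      if_false, if_pos hc]
    split_ifs <;> first | (exfalso; omega) | norm_num
  · rw [show min J M = M from by omega, show min (J+1) M = M from by omega]
    simp only [show (M < J ∧ (J - M) % 2 = 1) ↔ False from iff_false_intro (by omega),
      show (M < J + 1 ∧ (J + 1 - M) % 2 = 1) ↔ True from iff_true_intro (by omega),
      if_false, if_true, if_neg (show ¬ J < M from by omega)]
    split_ifs <;> first | (exfalso; omega) | norm_num
  · rw [show min J M = M from by omega, show min (J+1) M = M from by omega]
    simp only [show (M < J ∧ (J - M) % 2 = 1) ↔ (J - M) % 2 = 1 from by omega,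
      show (M < J + 1 ∧ (J + 1 - M) % 2 = 1) ↔ (J + 1 - M) % 2 = 1 from by omega,
      if_neg (show ¬ J < M from by omega)]
    split_ifs <;> first | (exfalso; omega) | norm_num

lemma mono_intervals (ρ : ℕ) (ii jj : Fin ρ → ℕ)
    (hb' : ∀ k, ii k ≤ jj k)
    (hgap : ∀ k : Fin ρ, ∀ h : (k : ℕ) + 1 < ρ, jj k + 2 ≤ ii ⟨(k : ℕ) + 1, h⟩) :
    ∀ n, ∀ hn : n < ρ, ∀ a : Fin ρ, (a : ℕ) < n → jj a + 2 ≤ ii ⟨n, hn⟩ := by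
  intro n
  induction n with
  | zero => intro _ a ha; omega
  | succ n ihn =>
    intro hn a ha
    rcases Nat.lt_or_ge (a : ℕ) n with h | h
    · have h1 := ihn (by omega) a h
      have h2 := hb' ⟨n, by omega⟩
      have h3 : jj ⟨n, by omega⟩ + 2 ≤ ii ⟨n + 1, hn⟩ := by
        simpa using hgap ⟨n, by omega⟩ (by simpa using hn)
      omega
    · have hae : (a : ℕ) = n := by omega
      have h3 := hgap a (by omega)
      have e : (⟨(a : ℕ) + 1, by omega⟩ : Fin ρ) = ⟨n + 1, hn⟩ := Fin.ext (by simp [hae])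
      rw [e] at h3
      exact h3

theorem stmt_17 (t : ℕ) (ht : 4 ≤ t) (hev : Even t)
    (ρ : ℕ) (hρ : 1 ≤ ρ)
    (ii jj : Fin ρ → ℕ)
    -- each interval [i_k, j_k] satisfies 1 ≤ i_k ≤ j_k < t (so t ∉ A)
    (hb : ∀ k, 1 ≤ ii k ∧ ii k ≤ jj k ∧ jj k < t)
    -- consecutive intervals are nonadjacent: j_k + 2 ≤ i_{k+1}
    (hgap : ∀ k : Fin ρ, ∀ h : (k : ℕ) + 1 < ρ, jj k + 2 ≤ ii ⟨(k : ℕ) + 1, h⟩)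
    -- 1 ∉ A: the first interval starts after 1
    (h1 : 1 < ii ⟨0, hρ⟩) :
    -- _{−A}T^{(+)} = ( P(t)^1 + Σ_{k=1}^{ρ} P(t)^{j_k+1} − Σ_{ℓ=1}^{ρ} P(t)^{i_ℓ} ) · W(R)
    (fun c : Fin t =>
        if ∃ k, ii k ≤ (c : ℕ) + 1 ∧ (c : ℕ) + 1 ≤ jj k then (-1 : ℝ) else 1) =
      Matrix.vecMul
        (fun c =>
          Pmat t ⟨0, by omega⟩ c +
          (∑ k : Fin ρ, Pmat t ⟨jj k, (hb k).2.2⟩ c) -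
          ∑ k : Fin ρ, Pmat t ⟨ii k - 1, by obtain ⟨a, b, c'⟩ := hb k; omega⟩ c)
        (Wmat t) := by
  funext c
  have expand : Matrix.vecMul
        (fun c =>
          Pmat t ⟨0, by omega⟩ c +
          (∑ k : Fin ρ, Pmat t ⟨jj k, (hb k).2.2⟩ c) -
          ∑ k : Fin ρ, Pmat t ⟨ii k - 1, by obtain ⟨a, b, c'⟩ := hb k; omega⟩ c)
        (Wmat t) c
      = ∑ k : Fin t,
          (Pmat t ⟨0, by omega⟩ k +
           (∑ r : Fin ρ, Pmat t ⟨jj r, (hb r).2.2⟩ k) -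
           ∑ r : Fin ρ, Pmat t ⟨ii r - 1, by obtain ⟨a, b, c'⟩ := hb r; omega⟩ k)
          * Wmat t k c := by
    simp [Matrix.vecMul, dotProduct]
  rw [expand]
  simp only [add_mul, sub_mul, Finset.sum_mul]
  rw [Finset.sum_sub_distrib, Finset.sum_add_distrib]
  rw [key t hev ⟨0, by omega⟩ c]
  have k1 : ∀ r : Fin ρ,
      ∑ k : Fin t, Pmat t ⟨jj r, (hb r).2.2⟩ k * Wmat t k c
        = if (c:ℕ) < jj r then (-1:ℝ) else 1 := fun r => key t hev _ c
  have k2 : ∀ r : Fin ρ,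
      ∑ k : Fin t, Pmat t (⟨ii r - 1, by obtain ⟨a, b, c'⟩ := hb r; omega⟩ : Fin t) k * Wmat t k c
        = if (c:ℕ) < ii r - 1 then (-1:ℝ) else 1 := fun r => key t hev _ c
  have E1 : ∑ k : Fin t, ∑ r : Fin ρ, Pmat t ⟨jj r, (hb r).2.2⟩ k * Wmat t k c
      = ∑ r : Fin ρ, if (c:ℕ) < jj r then (-1:ℝ) else 1 := by
    rw [Finset.sum_comm]
    exact Finset.sum_congr rfl fun r _ => k1 r
  have E2 : ∑ k : Fin t, ∑ r : Fin ρ,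
        Pmat t (⟨ii r - 1, by obtain ⟨a, b, c'⟩ := hb r; omega⟩ : Fin t) k * Wmat t k c
      = ∑ r : Fin ρ, if (c:ℕ) < ii r - 1 then (-1:ℝ) else 1 := by
    rw [Finset.sum_comm]
    exact Finset.sum_congr rfl fun r _ => k2 r
  rw [E1, E2]
  have hdiff : ((∑ r : Fin ρ, if (c:ℕ) < jj r then (-1:ℝ) else 1)
      - ∑ r : Fin ρ, if (c:ℕ) < ii r - 1 then (-1:ℝ) else 1)
      = ∑ r : Fin ρ, (if ii r ≤ (c:ℕ) + 1 ∧ (c:ℕ) + 1 ≤ jj r then (-2:ℝ) else 0) := by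
    rw [← Finset.sum_sub_distrib]
    refine Finset.sum_congr rfl fun r _ => ?_
    obtain ⟨ha, hbb, hcc⟩ := hb r
    split_ifs <;> first | (exfalso; omega) | norm_num
  have hnlt : ¬ ((c:ℕ) < ((⟨0, by omega⟩ : Fin t) : ℕ)) := by simp
  rw [if_neg hnlt]
  have huniq : ∀ r s : Fin ρ,
      (ii r ≤ (c:ℕ) + 1 ∧ (c:ℕ) + 1 ≤ jj r) →
      (ii s ≤ (c:ℕ) + 1 ∧ (c:ℕ) + 1 ≤ jj s) → r = s := by
    intro r s hr hs
    by_contra hne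
    have hmono := mono_intervals ρ ii jj (fun k => (hb k).2.1) hgap
    rcases lt_trichotomy ((r:ℕ)) ((s:ℕ)) with h | h | h
    · have := hmono (s:ℕ) s.isLt r h
      rw [Fin.eta] at this
      omega
    · exact hne (Fin.ext h)
    · have := hmono (r:ℕ) r.isLt s h
      rw [Fin.eta] at this
      omega
  have hsum : (∑ r : Fin ρ, (if ii r ≤ (c:ℕ) + 1 ∧ (c:ℕ) + 1 ≤ jj r then (-2:ℝ) else 0))
      = if ∃ k, ii k ≤ (c:ℕ) + 1 ∧ (c:ℕ) + 1 ≤ jj k then (-2:ℝ) else 0 := by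
    by_cases hex : ∃ k, ii k ≤ (c:ℕ) + 1 ∧ (c:ℕ) + 1 ≤ jj k
    · obtain ⟨k0, hk0⟩ := hex
      rw [if_pos ⟨k0, hk0⟩]
      rw [Finset.sum_eq_single_of_mem k0 (Finset.mem_univ k0)]
      · rw [if_pos hk0]
      · intro b _ hbne
        rw [if_neg]
        intro hbP
        exact hbne (huniq b k0 hbP hk0)
    · rw [if_neg hex, Finset.sum_eq_zero]
      intro r _
      rw [if_neg]
      intro hP
      exact hex ⟨r, hP⟩
  have : (1:ℝ) + ((∑ r : Fin ρ, if (c:ℕ) < jj r then (-1:ℝ) else 1)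
      - ∑ r : Fin ρ, if (c:ℕ) < ii r - 1 then (-1:ℝ) else 1)
      = 1 + if ∃ k, ii k ≤ (c:ℕ) + 1 ∧ (c:ℕ) + 1 ≤ jj k then (-2:ℝ) else 0 := by
    rw [hdiff, hsum]
  rw [add_sub_assoc, this]
  by_cases hex : ∃ k, ii k ≤ (c:ℕ) + 1 ∧ (c:ℕ) + 1 ≤ jj k
  · rw [if_pos hex, if_pos hex]; norm_num
  · rw [if_neg hex, if_neg hex]; norm_num
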